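/- Existence of asymmetric-information equilibrium strategies: fix T with 0 < T ≤ min (θ̲₁ · T_max) (θ̲₂ · T_max), and suppose the minimal-type constrained-equilibrium condition holds: σ₁(θ̲₁) ≤ m_A(σ₂(θ̲₂)) and σ₂(θ̲₂) ≥ s_A(σ₁(θ̲₁)). Then the T-targeting strategy profile is an ex-post equilibrium: for every θ₁ ∈ [θ̲₁, θ̄₁] and every θ₂ ∈ [θ̲₂, θ̄₂], σ₁(θ₁) maximizes x ↦ π_mm(x, σ₂(θ₂); θ₁, θ₂) over [0, σ₂(θ₂)] and σ₂(θ₂) maximizes y ↦ π_rm(σ₁(θ₁), y; θ₁, θ₂) over [σ₁(θ₁), r_b]. -/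

import Mathlib

open Set

/-- min over a concave function on a segment. -/
lemma concave_min_le' {f : ℝ → ℝ} {s : Set ℝ} (hf : ConcaveOn ℝ s f) {p q r : ℝ}
    (hp : p ∈ s) (hr : r ∈ s) (hpq : p ≤ q) (hqr : q ≤ r) :
    min (f p) (f r) ≤ f q := by
  rcases eq_or_lt_of_le (hpq.trans hqr) with h | h
  · have hqp : q = p := le_antisymm (by rw [h]; exact hqr) hpq
    rw [hqp]; exact min_le_left _ _
  · have hrp : 0 < r - p := by linarith
    have ha : 0 ≤ (r - q)/(r - p) := div_nonneg (by linarith) hrp.le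
    have hb : 0 ≤ (q - p)/(r - p) := div_nonneg (by linarith) hrp.le
    have hab : (r - q)/(r - p) + (q - p)/(r - p) = 1 := by field_simp; ring
    have key := hf.2 hp hr ha hb hab
    have hq : ((r - q)/(r - p)) • p + ((q - p)/(r - p)) • r = q := by
      simp only [smul_eq_mul]; field_simp; ring
    rw [hq] at key
    calc min (f p) (f r)
        = ((r - q)/(r - p)) * min (f p) (f r) + ((q - p)/(r - p)) * min (f p) (f r) := by
          rw [← add_mul, hab, one_mul]
      _ ≤ ((r - q)/(r - p)) • f p + ((q - p)/(r - p)) • f r := by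
          simp only [smul_eq_mul]
          exact add_le_add (mul_le_mul_of_nonneg_left (min_le_left _ _) ha)
            (mul_le_mul_of_nonneg_left (min_le_right _ _) hb)
      _ ≤ f q := key

lemma concaveAux {h : ℝ → ℝ} {U : Set ℝ} (hUo : IsOpen U)
    (h2 : ContDiffOn ℝ 2 h U) {a b : ℝ} (hsub : Icc a b ⊆ U)
    (hcont : ContinuousOn h (Icc a b)) (c ε : ℝ)
    (hneg : ∀ r ∈ Ioo a b, 2*ε*deriv h r + (c + ε*r)*deriv (deriv h) r ≤ 0) :
    ConcaveOn ℝ (Icc a b) (fun r => (c + ε*r) * h r) := by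
  have hd : DifferentiableOn ℝ h U := h2.differentiableOn (by norm_num)
  have hd' : DifferentiableOn ℝ (deriv h) U :=
    (h2.deriv_of_isOpen (m := 1) hUo (by norm_num)).differentiableOn (by norm_num)
  refine concaveOn_of_hasDerivWithinAt2_nonpos
    (f' := fun r => ε * h r + (c + ε*r) * deriv h r)
    (f'' := fun r => 2*ε*deriv h r + (c + ε*r)*deriv (deriv h) r)
    (convex_Icc a b)
    ((continuousOn_const.add (continuousOn_const.mul continuousOn_id)).mul hcont)
    ?_ ?_ ?_
  · intro r hr
    rw [interior_Icc] at hr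
    have hrU : r ∈ U := hsub ⟨hr.1.le, hr.2.le⟩
    have hAt : HasDerivAt h (deriv h r) r :=
      ((hd r hrU).differentiableAt (hUo.mem_nhds hrU)).hasDerivAt
    have hL : HasDerivAt (fun x => c + ε*x) ε r := by
      simpa using ((hasDerivAt_id r).const_mul ε).const_add c
    exact (hL.mul hAt).hasDerivWithinAt
  · intro r hr
    rw [interior_Icc] at hr
    have hrU : r ∈ U := hsub ⟨hr.1.le, hr.2.le⟩
    have hAt : HasDerivAt h (deriv h r) r :=
      ((hd r hrU).differentiableAt (hUo.mem_nhds hrU)).hasDerivAt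
    have hAt' : HasDerivAt (deriv h) (deriv (deriv h) r) r :=
      ((hd' r hrU).differentiableAt (hUo.mem_nhds hrU)).hasDerivAt
    have hL : HasDerivAt (fun x => c + ε*x) ε r := by
      simpa using ((hasDerivAt_id r).const_mul ε).const_add c
    have H := (hAt.const_mul ε).add (hL.mul hAt')
    exact (H.congr_deriv (by ring)).hasDerivWithinAt
  · intro r hr
    rw [interior_Icc] at hr
    exact hneg r hr

/-- Type-dependent interdealer trade quantity. -/
noncomputable def interQt (D S : ℝ → ℝ) (θ1 θ2 x y : ℝ) : ℝ :=
  min (θ1 * D x) (θ2 * S y)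

/-- Type-dependent payoff of `BD_mm`. -/
noncomputable def piMMt (D S : ℝ → ℝ) (θ1 θ2 x y : ℝ) : ℝ :=
  (1 / 2) * max (y - x) 0 * interQt D S θ1 θ2 x y -
    max (θ1 * D x - interQt D S θ1 θ2 x y) 0 * x

/-- Type-dependent payoff of `BD_rm`. -/
noncomputable def piRMt (D S : ℝ → ℝ) (θ1 θ2 x y : ℝ) : ℝ :=
  (1 / 2) * max (y - x) 0 * interQt D S θ1 θ2 x y -
    max (θ2 * S y - interQt D S θ1 θ2 x y) 0 * y

set_option maxHeartbeats 1000000 in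
/-- Existence of asymmetric-information equilibrium strategies: under the
minimal-type constrained-equilibrium condition, the `T`-targeting strategy
profile is an ex-post equilibrium. -/
theorem asymmetric_equilibrium_existence
    (rhat rb Tmax : ℝ) (D S mA sA : ℝ → ℝ)
    (hrhat : 0 < rhat) (hrb : rhat < rb) (hTmax : 0 < Tmax)
    (hDc : ContinuousOn D (Icc 0 rb)) (hDm : StrictMonoOn D (Icc 0 rb))
    (hD0 : D 0 = 0) (hDr : D rhat = Tmax)
    (hSc : ContinuousOn S (Icc 0 rb)) (hSa : StrictAntiOn S (Icc 0 rb))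
    (hSb : S rb = 0) (hSr : S rhat = Tmax)
    (U : Set ℝ) (hUo : IsOpen U) (hU : Icc (0:ℝ) rb ⊆ U)
    (hD2 : ContDiffOn ℝ 2 D U) (hS2 : ContDiffOn ℝ 2 S U)
    (hD' : ∀ x ∈ Icc (0:ℝ) rb, 0 < deriv D x)
    (hD'' : ∀ x ∈ Icc (0:ℝ) rb, deriv (deriv D) x < 0)
    (hS' : ∀ x ∈ Icc (0:ℝ) rb, deriv S x < 0)
    (hS'' : ∀ x ∈ Icc (0:ℝ) rb, deriv (deriv S) x < 0)
    (θl1 θu1 θl2 θu2 : ℝ)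
    (hθ1 : 0 < θl1) (hθ1' : θl1 ≤ θu1) (hθ2 : 0 < θl2) (hθ2' : θl2 ≤ θu2)
    (T : ℝ) (hT0 : 0 < T) (hTle : T ≤ min (θl1 * Tmax) (θl2 * Tmax))
    (σ1 σ2 : ℝ → ℝ)
    (hσ1 : ∀ θ1 ∈ Icc θl1 θu1, σ1 θ1 ∈ Icc (0:ℝ) rhat ∧ θ1 * D (σ1 θ1) = T)
    (hσ2 : ∀ θ2 ∈ Icc θl2 θu2, σ2 θ2 ∈ Icc rhat rb ∧ θ2 * S (σ2 θ2) = T)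
    (hmA : ∀ y ∈ Ioc (0:ℝ) rb, mA y ∈ Icc (0:ℝ) y ∧
      (∀ r ∈ Icc (0:ℝ) y, (y - r) * D r ≤ (y - mA y) * D (mA y)) ∧
      (∀ m ∈ Icc (0:ℝ) y,
        (∀ r ∈ Icc (0:ℝ) y, (y - r) * D r ≤ (y - m) * D m) → m = mA y))
    (hsA : ∀ x ∈ Ico (0:ℝ) rb, sA x ∈ Icc x rb ∧
      (∀ r ∈ Icc x rb, (r - x) * S r ≤ (sA x - x) * S (sA x)) ∧
      (∀ m ∈ Icc x rb,
        (∀ r ∈ Icc x rb, (r - x) * S r ≤ (m - x) * S m) → m = sA x))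
    (hmin1 : σ1 θl1 ≤ mA (σ2 θl2))
    (hmin2 : sA (σ1 θl1) ≤ σ2 θl2) :
    ∀ θ1 ∈ Icc θl1 θu1, ∀ θ2 ∈ Icc θl2 θu2,
      (∀ x ∈ Icc (0:ℝ) (σ2 θ2),
        piMMt D S θ1 θ2 x (σ2 θ2) ≤ piMMt D S θ1 θ2 (σ1 θ1) (σ2 θ2)) ∧
      (∀ y ∈ Icc (σ1 θ1) rb,
        piRMt D S θ1 θ2 (σ1 θ1) y ≤ piRMt D S θ1 θ2 (σ1 θ1) (σ2 θ2)) := by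
  intro θ1 hθ1m θ2 hθ2m
  obtain ⟨hx1mem, hx1T⟩ := hσ1 θ1 hθ1m
  obtain ⟨hy2mem, hy2T⟩ := hσ2 θ2 hθ2m
  obtain ⟨hxlmem, hxlT⟩ := hσ1 θl1 ⟨le_rfl, hθ1'⟩
  obtain ⟨hylmem, hylT⟩ := hσ2 θl2 ⟨le_rfl, hθ2'⟩
  set x1 := σ1 θ1 with hx1def
  set y2 := σ2 θ2 with hy2def
  set xl := σ1 θl1 with hxldef
  set yl := σ2 θl2 with hyldef
  have hθ1pos : 0 < θ1 := lt_of_lt_of_le hθ1 hθ1m.1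
  have hθ2pos : 0 < θ2 := lt_of_lt_of_le hθ2 hθ2m.1
  have hx10 : 0 ≤ x1 := hx1mem.1
  have hx1rb : x1 ≤ rb := hx1mem.2.trans hrb.le
  have hx1rb' : x1 < rb := lt_of_le_of_lt hx1mem.2 hrb
  have hx1Icc : x1 ∈ Icc (0:ℝ) rb := ⟨hx10, hx1rb⟩
  have hy2rb : y2 ≤ rb := hy2mem.2
  have hy2pos : 0 < y2 := lt_of_lt_of_le hrhat hy2mem.1
  have hy2Icc : y2 ∈ Icc (0:ℝ) rb := ⟨hy2pos.le, hy2rb⟩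
  have hx1y2 : x1 ≤ y2 := hx1mem.2.trans hy2mem.1
  have hxl0 : 0 ≤ xl := hxlmem.1
  have hxlrb : xl ≤ rb := hxlmem.2.trans hrb.le
  have hxlIcc : xl ∈ Icc (0:ℝ) rb := ⟨hxl0, hxlrb⟩
  have hylpos : 0 < yl := lt_of_lt_of_le hrhat hylmem.1
  have hylrb : yl ≤ rb := hylmem.2
  have hylIcc : yl ∈ Icc (0:ℝ) rb := ⟨hylpos.le, hylrb⟩
  -- positivity of D x1, S y2
  have hDx1pos : 0 < D x1 := by nlinarith only [hθ1pos, hT0, hx1T]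
  have hSy2pos : 0 < S y2 := by nlinarith only [hθ2pos, hT0, hy2T]
  have hDxlpos : 0 < D xl := by nlinarith only [hθ1, hT0, hxlT]
  have hSylpos : 0 < S yl := by nlinarith only [hθ2, hT0, hylT]
  -- monotonicity of the strategies in type
  have hx1xl : x1 ≤ xl := by
    by_contra hcon
    push_neg at hcon
    have hDlt : D xl < D x1 := hDm hxlIcc hx1Icc hcon
    nlinarith only [hθ1, hθ1m.1, hθ1pos, hDx1pos, hDlt, hx1T, hxlT]
  have hyly2 : yl ≤ y2 := by
    by_contra hcon
    push_neg at hcon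
    have hSlt : S yl < S y2 := hSa hy2Icc hylIcc hcon
    nlinarith only [hθ2, hθ2m.1, hθ2pos, hSylpos, hSlt, hy2T, hylT]
  -- mA facts
  obtain ⟨hm2mem, hm2max, hm2uniq⟩ := hmA y2 ⟨hy2pos, hy2rb⟩
  obtain ⟨hmlmem, hmlmax, hmluniq⟩ := hmA yl ⟨hylpos, hylrb⟩
  have hmAmono : mA yl ≤ mA y2 := by
    by_contra hcon
    push_neg at hcon
    have hmlIcc2 : mA yl ∈ Icc (0:ℝ) y2 := ⟨hmlmem.1, hmlmem.2.trans hyly2⟩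
    have hm2Iccl : mA y2 ∈ Icc (0:ℝ) yl := ⟨hm2mem.1, hcon.le.trans hmlmem.2⟩
    have hDmono : D (mA y2) ≤ D (mA yl) :=
      hDm.monotoneOn ⟨hm2mem.1, hm2mem.2.trans hy2rb⟩
        ⟨hmlmem.1, hmlmem.2.trans hylrb⟩ hcon.le
    have key : ∀ r ∈ Icc (0:ℝ) y2, (y2 - r) * D r ≤ (y2 - mA yl) * D (mA yl) := by
      intro r hr
      have h1 := hm2max r hr
      have h2 := hmlmax (mA y2) hm2Iccl
      linarith only [h1, h2, mul_le_mul_of_nonneg_left hDmono (sub_nonneg.2 hyly2)]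
    exact hcon.ne' (hm2uniq (mA yl) hmlIcc2 key)
  -- sA facts
  obtain ⟨hs1mem, hs1max, hs1uniq⟩ := hsA x1 ⟨hx10, hx1rb'⟩
  obtain ⟨hslmem, hslmax, hsluniq⟩ := hsA xl ⟨hxl0, lt_of_le_of_lt hxlmem.2 hrb⟩
  have hsAmono : sA x1 ≤ sA xl := by
    by_contra hcon
    push_neg at hcon
    have hs1Iccl : sA x1 ∈ Icc xl rb := ⟨(hslmem.1).trans hcon.le, hs1mem.2⟩
    have hslIcc1 : sA xl ∈ Icc x1 rb := ⟨hx1xl.trans hslmem.1, hslmem.2⟩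
    have hSmono : S (sA x1) ≤ S (sA xl) :=
      hSa.antitoneOn ⟨hxl0.trans hslmem.1, hslmem.2⟩
        ⟨hx10.trans hs1mem.1, hs1mem.2⟩ hcon.le
    have key : ∀ r ∈ Icc xl rb, (r - xl) * S r ≤ (sA x1 - xl) * S (sA x1) := by
      intro r hr
      have h1 := hslmax r hr
      have h2 := hs1max (sA xl) hslIcc1
      have hprod : (x1 - xl) * S (sA xl) ≤ (x1 - xl) * S (sA x1) :=
        mul_le_mul_of_nonpos_left hSmono (sub_nonpos.2 hx1xl)
      linarith only [h1, h2, hprod]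
    exact hcon.ne' (hsluniq (sA x1) hs1Iccl key)
  -- the chain inequalities
  have hx1mA : x1 ≤ mA y2 := le_trans (hx1xl.trans hmin1) hmAmono
  have hsAy2 : sA x1 ≤ y2 := le_trans hsAmono (hmin2.trans hyly2)
  -- concavity of the two objective functions
  have hconcf : ConcaveOn ℝ (Icc 0 y2) (fun r => (y2 + (-1)*r) * D r) := by
    refine concaveAux hUo hD2 (subset_trans (Icc_subset_Icc le_rfl hy2rb) hU)
      (hDc.mono (Icc_subset_Icc le_rfl hy2rb)) y2 (-1) ?_
    intro r hr
    have hrIcc : r ∈ Icc (0:ℝ) rb := ⟨hr.1.le, hr.2.le.trans hy2rb⟩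
    nlinarith only [hD' r hrIcc, hD'' r hrIcc, hr.2]
  have hconcg : ConcaveOn ℝ (Icc x1 rb) (fun r => (-x1 + 1*r) * S r) := by
    refine concaveAux hUo hS2 (subset_trans (Icc_subset_Icc hx10 le_rfl) hU)
      (hSc.mono (Icc_subset_Icc hx10 le_rfl)) (-x1) 1 ?_
    intro r hr
    have hrIcc : r ∈ Icc (0:ℝ) rb := ⟨hx10.trans hr.1.le, hr.2.le⟩
    nlinarith only [hS' r hrIcc, hS'' r hrIcc, hr.1]
  -- value of the payoffs at the strategy profile
  have hQeq : interQt D S θ1 θ2 x1 y2 = T := by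
    simp only [interQt, hx1T, hy2T, min_self]
  have hvalMM : piMMt D S θ1 θ2 x1 y2 = 1/2 * (y2 - x1) * T := by
    simp only [piMMt, hQeq, hx1T, max_eq_left (sub_nonneg.2 hx1y2), sub_self, max_self,
      zero_mul, sub_zero]
  have hvalRM : piRMt D S θ1 θ2 x1 y2 = 1/2 * (y2 - x1) * T := by
    simp only [piRMt, hQeq, hy2T, max_eq_left (sub_nonneg.2 hx1y2), sub_self, max_self,
      zero_mul, sub_zero]
  constructor
  · -- BD_mm side
    intro x hx
    rw [hvalMM]
    have hxIcc : x ∈ Icc (0:ℝ) rb := ⟨hx.1, hx.2.trans hy2rb⟩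
    rcases le_or_gt x x1 with hcase | hcase
    · have hDle : D x ≤ D x1 := hDm.monotoneOn hxIcc hx1Icc hcase
      have hQle : θ1 * D x ≤ θ2 * S y2 := by
        rw [hy2T, ← hx1T]
        exact mul_le_mul_of_nonneg_left hDle hθ1pos.le
      have hQ : interQt D S θ1 θ2 x y2 = θ1 * D x := by
        simp only [interQt]; exact min_eq_left hQle
      have hvx : piMMt D S θ1 θ2 x y2 = 1/2 * (y2 - x) * (θ1 * D x) := by
        simp only [piMMt, hQ, max_eq_left (sub_nonneg.2 hx.2), sub_self, max_self,
          zero_mul, sub_zero]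
      rw [hvx]
      have hkey := concave_min_le' hconcf (p := x) (q := x1) (r := mA y2) hx hm2mem hcase hx1mA
      have hfx : (y2 + (-1)*x) * D x ≤ (y2 + (-1)*(mA y2)) * D (mA y2) := by
        linarith only [hm2max x hx]
      rw [min_eq_left hfx] at hkey
      rw [← hx1T]
      linarith only [mul_le_mul_of_nonneg_left hkey hθ1pos.le]
    · have hDge : D x1 ≤ D x := hDm.monotoneOn hx1Icc hxIcc hcase.le
      have hQ : interQt D S θ1 θ2 x y2 = T := by
        simp only [interQt, hy2T]
        refine min_eq_right ?_
        rw [← hx1T]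
        exact mul_le_mul_of_nonneg_left hDge hθ1pos.le
      have h0 : 0 ≤ max (θ1 * D x - T) 0 * x := mul_nonneg (le_max_right _ _) hx.1
      simp only [piMMt, hQ, max_eq_left (sub_nonneg.2 hx.2)]
      linarith only [h0, mul_le_mul_of_nonneg_right hcase.le hT0.le]
  · -- BD_rm side
    intro y hy
    rw [hvalRM]
    have hy0 : 0 ≤ y := hx10.trans hy.1
    have hyIcc : y ∈ Icc (0:ℝ) rb := ⟨hy0, hy.2⟩
    rcases le_or_gt y2 y with hcase | hcase
    · have hSle : S y ≤ S y2 := hSa.antitoneOn hy2Icc hyIcc hcase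
      have hQle : θ2 * S y ≤ θ1 * D x1 := by
        rw [hx1T, ← hy2T]
        exact mul_le_mul_of_nonneg_left hSle hθ2pos.le
      have hQ : interQt D S θ1 θ2 x1 y = θ2 * S y := by
        simp only [interQt]; exact min_eq_right hQle
      have hvy : piRMt D S θ1 θ2 x1 y = 1/2 * (y - x1) * (θ2 * S y) := by
        simp only [piRMt, hQ, max_eq_left (sub_nonneg.2 hy.1), sub_self, max_self,
          zero_mul, sub_zero]
      rw [hvy]
      have hy2Icc' : y2 ∈ Icc x1 rb := ⟨hx1y2, hy2rb⟩
      have hkey := concave_min_le' hconcg (p := sA x1) (q := y2) (r := y) hs1mem hy hsAy2 hcase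
      have hgy : (-x1 + 1*y) * S y ≤ (-x1 + 1*(sA x1)) * S (sA x1) := by
        linarith only [hs1max y hy]
      rw [min_eq_right hgy] at hkey
      rw [← hy2T]
      linarith only [mul_le_mul_of_nonneg_left hkey hθ2pos.le]
    · have hSge : S y2 ≤ S y := hSa.antitoneOn hyIcc hy2Icc hcase.le
      have hQ : interQt D S θ1 θ2 x1 y = T := by
        simp only [interQt, hx1T]
        refine min_eq_left ?_
        rw [← hy2T]
        exact mul_le_mul_of_nonneg_left hSge hθ2pos.le
      have h0 : 0 ≤ max (θ2 * S y - T) 0 * y := mul_nonneg (le_max_right _ _) hy0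
      simp only [piRMt, hQ, max_eq_left (sub_nonneg.2 hy.1)]
      linarith only [h0, mul_le_mul_of_nonneg_right hcase.le hT0.le]
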